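/- Let X be a real locally convex space and let P, Q ⊆ X be closed convex cones with 0 ∈ P ∩ Q. If the interior of P intersects Q (i.e., there exists a point of Q lying in the interior of P), then (P ∩ Q)* = P* + Q*, where for a cone C the dual cone is C* = {φ ∈ X' : ⟨c, φ⟩ ≥ 0 for all c ∈ C}. -/

import Mathlib

open Filter Set Topology Pointwise

/-- Dual cone intersection formula: if `P`, `Q` are closed convex cones in a real locally
convex space with `0 ∈ P ∩ Q` and the interior of `P` intersects `Q`,
then `(P ∩ Q)* = P* + Q*`. -/
theorem dual_cone_intersection_interior {X : Type*} [AddCommGroup X] [Module ℝ X]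
    [TopologicalSpace X] [IsTopologicalAddGroup X] [ContinuousSMul ℝ X]
    [LocallyConvexSpace ℝ X]
    (P Q : Set X)
    (hPc : IsClosed P) (hQc : IsClosed Q)
    (hPconv : Convex ℝ P) (hQconv : Convex ℝ Q)
    (hPcone : ∀ x ∈ P, ∀ t : ℝ, 0 ≤ t → t • x ∈ P)
    (hQcone : ∀ x ∈ Q, ∀ t : ℝ, 0 ≤ t → t • x ∈ Q)
    (h0 : (0 : X) ∈ P ∩ Q)
    (hint : (interior P ∩ Q).Nonempty) :
    {φ : X →L[ℝ] ℝ | ∀ c ∈ P ∩ Q, 0 ≤ φ c}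
      = {φ : X →L[ℝ] ℝ | ∃ φP φQ : X →L[ℝ] ℝ,
          (∀ c ∈ P, 0 ≤ φP c) ∧ (∀ c ∈ Q, 0 ≤ φQ c) ∧ φ = φP + φQ} := by
  obtain ⟨x₀, hx₀P, hx₀Q⟩ := hint
  have hx₀P' : x₀ ∈ P := interior_subset hx₀P
  -- cones are closed under addition
  have hPadd : ∀ a ∈ P, ∀ b ∈ P, a + b ∈ P := by
    intro a ha b hb
    have h1 : (1/2 : ℝ) • a + (1/2 : ℝ) • b ∈ P :=
      hPconv ha hb (by norm_num) (by norm_num) (by norm_num)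
    have h2 := hPcone _ h1 2 (by norm_num)
    convert h2 using 1
    rw [smul_add, smul_smul, smul_smul]; norm_num
  have hQadd : ∀ a ∈ Q, ∀ b ∈ Q, a + b ∈ Q := by
    intro a ha b hb
    have h1 : (1/2 : ℝ) • a + (1/2 : ℝ) • b ∈ Q :=
      hQconv ha hb (by norm_num) (by norm_num) (by norm_num)
    have h2 := hQcone _ h1 2 (by norm_num)
    convert h2 using 1
    rw [smul_add, smul_smul, smul_smul]; norm_num
  -- scaling into the interior point
  have hscale : ∀ x : X, ∃ l : ℝ, 0 < l ∧ l • x₀ + x ∈ P := by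
    intro x
    have hc : ContinuousAt (fun t : ℝ => x₀ + t • x) 0 :=
      (continuous_const.add (continuous_id.smul continuous_const)).continuousAt
    have h0' : (fun t : ℝ => x₀ + t • x) 0 ∈ interior P := by simpa using hx₀P
    have hev : ∀ᶠ t in 𝓝 (0 : ℝ), x₀ + t • x ∈ interior P :=
      hc (isOpen_interior.mem_nhds h0')
    obtain ⟨ε, hε, hball⟩ := Metric.eventually_nhds_iff.mp hev
    have ht : (0 : ℝ) < ε / 2 := by linarith
    have hmem : x₀ + (ε / 2) • x ∈ P := by
      refine interior_subset (hball ?_)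
      simp only [dist_zero_right, Real.norm_eq_abs, abs_of_pos ht]
      linarith
    refine ⟨(ε / 2)⁻¹, by positivity, ?_⟩
    have := hPcone _ hmem (ε / 2)⁻¹ (by positivity)
    convert this using 1
    rw [smul_add, smul_smul, inv_mul_cancel₀ ht.ne', one_smul]
  ext φ
  simp only [Set.mem_setOf_eq]
  constructor
  · intro hφ
    -- the sublinear functional
    set S : X → Set ℝ := fun x => φ '' {u | u ∈ P ∧ u - x ∈ Q} with hS
    set p : X → ℝ := fun x => sInf (S x) with hp
    have hSne : ∀ x, (S x).Nonempty := by
      intro x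
      obtain ⟨l, hl, hlP⟩ := hscale x
      exact ⟨φ (l • x₀ + x), ⟨l • x₀ + x, ⟨hlP, by
        simpa using hQcone _ hx₀Q l hl.le⟩, rfl⟩⟩
    have hbdd : ∀ x, BddBelow (S x) := by
      intro x
      obtain ⟨l, hl, hlP⟩ := hscale (-x)
      refine ⟨φ x - l * φ x₀, ?_⟩
      rintro _ ⟨u, ⟨huP, huQ⟩, rfl⟩
      have hwQ : (u - x) + l • x₀ ∈ Q := hQadd _ huQ _ (hQcone _ hx₀Q l hl.le)
      have hwP : (u - x) + l • x₀ ∈ P := by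
        have := hPadd _ huP _ hlP
        convert this using 1; abel
      have h := hφ _ ⟨hwP, hwQ⟩
      rw [map_add, map_sub, map_smul, smul_eq_mul] at h
      linarith
    have hple : ∀ u x, u ∈ P → u - x ∈ Q → p x ≤ φ u := fun u x h1 h2 =>
      csInf_le (hbdd x) ⟨u, ⟨h1, h2⟩, rfl⟩
    have hlbb : ∀ x b, (∀ u, u ∈ P → u - x ∈ Q → b ≤ φ u) → b ≤ p x := by
      intro x b hb
      refine le_csInf (hSne x) ?_
      rintro _ ⟨u, ⟨h1, h2⟩, rfl⟩
      exact hb u h1 h2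
    have hp0 : 0 ≤ p 0 := hlbb 0 0 fun u hu huq => hφ u ⟨hu, by simpa using huq⟩
    -- positive homogeneity
    have N_hom : ∀ c : ℝ, 0 < c → ∀ x, p (c • x) = c * p x := by
      intro c hc x
      have hset : S (c • x) = c • S x := by
        ext a
        constructor
        · rintro ⟨u, ⟨huP, huQ⟩, rfl⟩
          refine ⟨φ (c⁻¹ • u), ⟨c⁻¹ • u, ⟨hPcone _ huP _ (by positivity), ?_⟩, rfl⟩, ?_⟩
          · have := hQcone _ huQ c⁻¹ (by positivity)
            convert this using 1
            rw [smul_sub, smul_smul, inv_mul_cancel₀ hc.ne', one_smul]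
          · simp only [map_smul, smul_smul, mul_inv_cancel₀ hc.ne', one_smul]
        · rintro ⟨_, ⟨u, ⟨huP, huQ⟩, rfl⟩, rfl⟩
          refine ⟨c • u, ⟨hPcone _ huP _ hc.le, ?_⟩, ?_⟩
          · have := hQcone _ huQ c hc.le
            convert this using 1
            rw [smul_sub]
          · simp [map_smul]
      rw [hp]
      simp only [hset]
      rw [Real.sInf_smul_of_nonneg hc.le, smul_eq_mul]
    -- subadditivity
    have N_add : ∀ x y, p (x + y) ≤ p x + p y := by
      intro x y
      have h1 : ∀ u, u ∈ P → u - x ∈ Q → ∀ v, v ∈ P → v - y ∈ Q →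
          p (x + y) ≤ φ u + φ v := by
        intro u huP huQ v hvP hvQ
        have hsum : (u + v) - (x + y) ∈ Q := by
          have := hQadd _ huQ _ hvQ
          convert this using 1; abel
        have := hple (u + v) (x + y) (hPadd _ huP _ hvP) hsum
        rwa [map_add] at this
      have h2 : p (x + y) - p x ≤ p y := by
        refine hlbb y _ fun v hvP hvQ => ?_
        have h3 : p (x + y) - φ v ≤ p x :=
          hlbb x _ fun u huP huQ => by linarith [h1 u huP huQ v hvP hvQ]
        linarith
      linarith
    -- Hahn-Banach
    obtain ⟨g, -, hg⟩ := exists_extension_of_le_sublinear ⟨⊥, 0⟩ p N_hom N_add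
      (by
        rintro ⟨x, hx⟩
        rw [Submodule.mem_bot] at hx
        subst hx
        simpa using hp0)
    -- bounds for g
    have hgP : ∀ c ∈ P, g c ≤ φ c := fun c hc =>
      (hg c).trans (hple c c hc (by simpa using h0.2))
    have hgQ : ∀ c ∈ Q, 0 ≤ g c := by
      intro c hc
      have h1 : p (-c) ≤ φ 0 := hple 0 (-c) h0.1 (by simpa using hc)
      have h2 : g (-c) ≤ 0 := (hg (-c)).trans (by simpa using h1)
      rw [map_neg] at h2
      linarith
    -- continuity of g
    have hM : 0 ≤ φ x₀ := hφ x₀ ⟨hx₀P', hx₀Q⟩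
    set M : ℝ := φ x₀ with hMdef
    have hUbd : ∀ x : X, x₀ + x ∈ P → g x ≤ φ x + M := by
      intro x hx
      have h1 : p x ≤ φ (x₀ + x) := hple (x₀ + x) x hx (by simpa using hx₀Q)
      rw [map_add] at h1
      have := (hg x).trans h1
      linarith
    set h : X →ₗ[ℝ] ℝ := g - (φ : X →ₗ[ℝ] ℝ) with hhdef
    have hhval : ∀ x, h x = g x - φ x := fun x => rfl
    set U : Set X := (fun x => x₀ + x) ⁻¹' interior P with hUdef
    have hUopen : IsOpen U := isOpen_interior.preimage (continuous_const.add continuous_id)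
    have hU0 : (0 : X) ∈ U := by simpa [hUdef] using hx₀P
    set V : Set X := U ∩ (fun x => -x) ⁻¹' U with hVdef
    have hV0 : V ∈ 𝓝 (0 : X) := by
      refine Filter.inter_mem (hUopen.mem_nhds hU0) ?_
      have : (0 : X) ∈ (fun x : X => -x) ⁻¹' U := by simpa using hU0
      exact (hUopen.preimage continuous_neg).mem_nhds this
    have hVbd : ∀ x ∈ V, |h x| ≤ 2 * M := by
      rintro x ⟨hx1, hx2⟩
      have hb1 : g x ≤ φ x + M := hUbd x (interior_subset hx1)
      have hb2 : g (-x) ≤ φ (-x) + M := hUbd (-x) (interior_subset hx2)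
      rw [map_neg, map_neg] at hb2
      rw [hhval, abs_le]
      constructor <;> linarith
    have hcont0 : ContinuousAt h 0 := by
      rw [ContinuousAt, map_zero]
      rw [Metric.tendsto_nhds]
      intro ε hε
      set t : ℝ := ε / (2 * M + 1) with htdef
      have ht : 0 < t := by positivity
      have hmem : t • V ∈ 𝓝 (0 : X) := by
        have := smul_mem_nhds_smul₀ ht.ne' hV0
        simpa using this
      filter_upwards [hmem] with x hx
      obtain ⟨y, hy, rfl⟩ := hx
      have : |h (t • y)| ≤ t * (2 * M) := by
        rw [map_smul, smul_eq_mul, abs_mul, abs_of_pos ht]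
        exact mul_le_mul_of_nonneg_left (hVbd y hy) ht.le
      have htM : t * (2 * M) < ε := by
        rw [htdef, div_mul_eq_mul_div, div_lt_iff₀ (by positivity)]
        nlinarith
      rw [Real.dist_eq, sub_zero]
      linarith
    have hhcont : Continuous h := continuous_of_continuousAt_zero h.toAddMonoidHom hcont0
    have hgcont : Continuous g := by
      have : (⇑g : X → ℝ) = fun x => h x + φ x := by
        funext x; rw [hhval]; ring
      rw [this]
      exact hhcont.add φ.continuous
    set φQ : X →L[ℝ] ℝ := ⟨g, hgcont⟩ with hφQ
    refine ⟨φ - φQ, φQ, fun c hc => ?_, fun c hc => hgQ c hc, by abel⟩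
    have := hgP c hc
    simp only [ContinuousLinearMap.sub_apply]
    change 0 ≤ φ c - g c
    linarith
  · rintro ⟨φP, φQ, hP, hQ, rfl⟩ c ⟨hcP, hcQ⟩
    exact add_nonneg (hP c hcP) (hQ c hcQ)
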